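/- Let q₁, p₁, r₁, s₁, w₁ : ℝ → ℝ be differentiable functions satisfying the ODE system q₁' = (2/27)(p₁s₁ + r₁w₁), p₁' = (2/27)p₁(p₁s₁ + r₁w₁), r₁' = (2/27)r₁(p₁s₁ + r₁w₁), s₁' = −(2/27)s₁(p₁s₁ + r₁w₁), w₁' = −(2/27)w₁(p₁s₁ + r₁w₁). Then the products p₁s₁ and r₁w₁ are each constant in t, and consequently q₁ is an affine function of t: q₁(t) = q₁(0) + (2/27)(p₁(0)s₁(0) + r₁(0)w₁(0))·t for all t. -/

import Mathlib

/-- along any solution of the N = 1 peakon system of Example 2, the products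
p₁s₁ and r₁w₁ are constant, and q₁ is the affine function
`q₁(t) = q₁(0) + (2/27)(p₁(0)s₁(0) + r₁(0)w₁(0))·t`. -/
theorem peakon_example2_invariants (q₁ p₁ r₁ s₁ w₁ : ℝ → ℝ)
    (hq : Differentiable ℝ q₁) (hp : Differentiable ℝ p₁) (hr : Differentiable ℝ r₁)
    (hs : Differentiable ℝ s₁) (hw : Differentiable ℝ w₁)
    (heq : ∀ t : ℝ,
      deriv q₁ t = (2 / 27) * (p₁ t * s₁ t + r₁ t * w₁ t) ∧
      deriv p₁ t = (2 / 27) * p₁ t * (p₁ t * s₁ t + r₁ t * w₁ t) ∧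
      deriv r₁ t = (2 / 27) * r₁ t * (p₁ t * s₁ t + r₁ t * w₁ t) ∧
      deriv s₁ t = -(2 / 27) * s₁ t * (p₁ t * s₁ t + r₁ t * w₁ t) ∧
      deriv w₁ t = -(2 / 27) * w₁ t * (p₁ t * s₁ t + r₁ t * w₁ t)) :
    (∀ t : ℝ, p₁ t * s₁ t = p₁ 0 * s₁ 0) ∧
    (∀ t : ℝ, r₁ t * w₁ t = r₁ 0 * w₁ 0) ∧
    (∀ t : ℝ, q₁ t = q₁ 0 + (2 / 27) * (p₁ 0 * s₁ 0 + r₁ 0 * w₁ 0) * t) := by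
  have hps : ∀ t : ℝ, p₁ t * s₁ t = p₁ 0 * s₁ 0 := by
    have h : ∀ t : ℝ, deriv (fun t => p₁ t * s₁ t) t = 0 := by
      intro t
      rw [deriv_fun_mul (hp t) (hs t), (heq t).2.1, (heq t).2.2.2.1]
      ring
    intro t
    exact is_const_of_deriv_eq_zero ((hp.mul hs)) h t 0
  have hrw : ∀ t : ℝ, r₁ t * w₁ t = r₁ 0 * w₁ 0 := by
    have h : ∀ t : ℝ, deriv (fun t => r₁ t * w₁ t) t = 0 := by
      intro t
      rw [deriv_fun_mul (hr t) (hw t), (heq t).2.2.1, (heq t).2.2.2.2]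
      ring
    intro t
    exact is_const_of_deriv_eq_zero ((hr.mul hw)) h t 0
  refine ⟨hps, hrw, ?_⟩
  have h : ∀ t : ℝ, deriv (fun t => q₁ t - (2 / 27) * (p₁ 0 * s₁ 0 + r₁ 0 * w₁ 0) * t) t = 0 := by
    intro t
    rw [deriv_fun_sub (hq t) (by fun_prop)]
    have : deriv (fun t : ℝ => (2 / 27) * (p₁ 0 * s₁ 0 + r₁ 0 * w₁ 0) * t) t
        = (2 / 27) * (p₁ 0 * s₁ 0 + r₁ 0 * w₁ 0) := by
      rw [deriv_const_mul _ differentiable_id.differentiableAt]; simp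
    rw [this, (heq t).1, hps t, hrw t]
    ring
  intro t
  have := is_const_of_deriv_eq_zero (f := fun t => q₁ t - (2 / 27) * (p₁ 0 * s₁ 0 + r₁ 0 * w₁ 0) * t)
    (hq.sub (by fun_prop)) h t 0
  simp at this
  linarith
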